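/- Assume a ≠ 1 and L := ln b / ln a < 0. Let I₀(y) = y^L for y > 0 and set δ = (1+b)·c^L/(2b). Then the function I₁(y) = δ·y^L is an inverse marginal function and satisfies the functional equation I₁(a·y) + b·I₁(y) = (1+b)·I₀(c·y) for all y > 0. -/

import Mathlib

open Set Filter

noncomputable section

/-- A utility function: `C²` on `(0,∞)`, strictly increasing and strictly concave there,
satisfying the Inada conditions. -/
def IsUtility (U : ℝ → ℝ) : Prop :=
  ContDiffOn ℝ 2 U (Set.Ioi 0) ∧
  (∀ x > 0, 0 < deriv U x) ∧
  (∀ x > 0, deriv (deriv U) x < 0) ∧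
  Tendsto (deriv U) (nhdsWithin 0 (Set.Ioi 0)) atTop ∧
  Tendsto (deriv U) atTop (nhds 0)

/-- An inverse marginal function: positive, `C¹` on `(0,∞)`, strictly decreasing derivative,
with `I(∞)=0` and `I(0+)=∞`. -/
def IsInvMarginal (I : ℝ → ℝ) : Prop :=
  (∀ y > 0, 0 < I y) ∧
  ContDiffOn ℝ 1 I (Set.Ioi 0) ∧
  (∀ y > 0, deriv I y < 0) ∧
  Tendsto I atTop (nhds 0) ∧
  Tendsto I (nhdsWithin 0 (Set.Ioi 0)) atTop

/-- `I` is the inverse of the marginal `U'` on the positive reals: `I = (U')⁻¹`. -/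
def InvMarginalOf (I U : ℝ → ℝ) : Prop :=
  (∀ x > 0, I (deriv U x) = x) ∧ (∀ y > 0, 0 < I y ∧ deriv U (I y) = y)

/-- `J` is the inverse function of `I` on the positive reals. -/
def IsInverseOf (J I : ℝ → ℝ) : Prop :=
  (∀ y > 0, J (I y) = y) ∧ (∀ x > 0, 0 < J x ∧ I (J x) = x)

/-- The single-period inverse investment problem:
`U₀(x) = sup {p·U₁(x+π(u−1)) + (1−p)·U₁(x+π(d−1)) : −x/(u−1) ≤ π ≤ x/(1−d)}` for all `x > 0`. -/
def SPIIP (u d p : ℝ) (U₀ U₁ : ℝ → ℝ) : Prop :=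
  ∀ x > 0, U₀ x =
    sSup ((fun pi => p * U₁ (x + pi * (u - 1)) + (1 - p) * U₁ (x + pi * (d - 1))) ''
      Set.Icc (-(x / (u - 1))) (x / (1 - d)))

/-- For `I₀(y) = y^L` with `L = log_a b < 0` and `δ = (1+b)·c^L/(2b)`, the
function `I₁(y) = δ·y^L` is an inverse marginal function solving the functional equation. -/
theorem stmt6
    (u d p q a b c L δ : ℝ)
    (hu : 1 < u) (hd0 : 0 < d) (hd1 : d < 1) (hp0 : 0 < p) (hp1 : p < 1)
    (hq : q = (1 - d) / (u - d)) (ha : a = ((1 - p) * q) / (p * (1 - q)))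
    (hb : b = (1 - q) / q) (hc : c = (1 - p) / (1 - q))
    (ha1 : a ≠ 1)
    (hL : L = Real.log b / Real.log a) (hLneg : L < 0)
    (hδ : δ = (1 + b) * c ^ L / (2 * b)) :
    IsInvMarginal (fun y => δ * y ^ L) ∧
    ∀ y > 0, δ * (a * y) ^ L + b * (δ * y ^ L) = (1 + b) * (c * y) ^ L := by

  have hq0 : 0 < q := by rw [hq]; exact div_pos (by linarith) (by linarith)
  have hq1 : q < 1 := by
    rw [hq, div_lt_one (by linarith)]; linarith
  have hb0 : 0 < b := by rw [hb]; exact div_pos (by linarith) hq0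
  have hc0 : 0 < c := by rw [hc]; exact div_pos (by linarith) (by linarith)
  have ha0 : 0 < a := by
    rw [ha]; exact div_pos (mul_pos (by linarith) hq0) (mul_pos hp0 (by linarith))
  have hδ0 : 0 < δ := by
    rw [hδ]
    exact div_pos (mul_pos (by linarith) (Real.rpow_pos_of_pos hc0 L)) (by linarith)
  have haL : a ^ L = b := by
    have : L = Real.logb a b := by rw [hL, Real.logb]
    rw [this]
    exact Real.rpow_logb ha0 ha1 hb0
  constructor
  · refine ⟨?_, ?_, ?_, ?_, ?_⟩
    · intro y hy
      exact mul_pos hδ0 (Real.rpow_pos_of_pos hy L)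
    · intro y hy
      exact ((Real.contDiffAt_rpow_const_of_ne (p := L) (ne_of_gt hy)).const_smul δ).contDiffWithinAt
    · intro y hy
      have h : HasDerivAt (fun y : ℝ => δ * y ^ L) (δ * (L * y ^ (L - 1))) y :=
        (Real.hasDerivAt_rpow_const (Or.inl (ne_of_gt hy))).const_mul δ
      rw [h.deriv]
      exact mul_neg_of_pos_of_neg hδ0
        (mul_neg_of_neg_of_pos hLneg (Real.rpow_pos_of_pos hy _))
    · have h : Filter.Tendsto (fun y : ℝ => y ^ L) Filter.atTop (nhds 0) := by
        have := tendsto_rpow_neg_atTop (y := -L) (by linarith)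
        simpa using this
      have := h.const_mul δ
      simpa using this
    · have h : Filter.Tendsto (fun y : ℝ => y ^ L) (nhdsWithin 0 (Set.Ioi 0)) Filter.atTop := by
        have h1 : Filter.Tendsto (fun y : ℝ => (y⁻¹) ^ (-L)) (nhdsWithin 0 (Set.Ioi 0))
            Filter.atTop :=
          (tendsto_rpow_atTop (by linarith)).comp tendsto_inv_nhdsGT_zero
        refine h1.congr' ?_
        filter_upwards [self_mem_nhdsWithin] with y hy
        rw [← Real.rpow_neg_one y, ← Real.rpow_mul (le_of_lt hy)]
        norm_num
      exact h.const_mul_atTop hδ0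
  · intro y hy
    have hyL : (a * y) ^ L = b * y ^ L := by
      rw [Real.mul_rpow (le_of_lt ha0) (le_of_lt hy), haL]
    rw [hyL, Real.mul_rpow (le_of_lt hc0) (le_of_lt hy)]
    have hb' : (2 : ℝ) * b ≠ 0 := by positivity
    field_simp [hδ] at *
    linear_combination hδ
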